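/- There exist a natural number k and a finite set F of patterns p : Fin 2 × Fin 2 → Fin k (forbidden 2×2 patterns) such that the associated two-dimensional subshift of finite type X = { f : ℤ × ℤ → Fin k | for every a : ℤ × ℤ, the 2×2 pattern (fun (i, j) : Fin 2 × Fin 2 => f (a.1 + i, a.2 + j)) does not belong to F } is nonempty, and moreover no element of X is periodic: for every f ∈ X and every v : ℤ × ℤ with v ≠ 0, there exists x : ℤ × ℤ with f (x + v) ≠ f x. -/

import Mathlib

namespace AperiodicSFT

structure Tile where
  t  : Fin 2
  a  : Fin 3
  b  : Fin 3
  c  : Fin 3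
  c' : Fin 3
  d  : Fin 3
deriving DecidableEq, Fintype

def Vld (T : Tile) : Prop :=
  (T.t = 0 → T.a.val ≤ 1 ∧ T.c.val ≤ 1 ∧ T.c'.val ≤ 1 ∧
      (T.b.val : ℤ) = 2 * T.a.val - T.c.val + T.c'.val) ∧
  (T.t = 1 → 1 ≤ T.a.val ∧ (3 * T.b.val : ℤ) = T.a.val + T.c.val - T.c'.val)

def Hok (T T' : Tile) : Prop :=
  T.t = T'.t ∧ T.c' = T'.c ∧ T'.d = T.b ∧
  (T.t = 0 → ¬(T.b = 0 ∧ T'.b = 0)) ∧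
  (T.t = 1 → ¬(T.d = 0 ∧ T.b = 0 ∧ T'.b = 0))

def Vok (T U : Tile) : Prop := U.a = T.b

def Allowed (P : Fin 2 × Fin 2 → Tile) : Prop :=
  Vld (P (0, 0)) ∧ Hok (P (0, 0)) (P (1, 0)) ∧ Vok (P (0, 0)) (P (0, 1))

instance : DecidablePred Vld := fun T => by unfold Vld; infer_instance
instance (T : Tile) : DecidablePred (Hok T) := fun T' => by unfold Hok; infer_instance
instance (T : Tile) : DecidablePred (Vok T) := fun U => by unfold Vok; infer_instance
instance : DecidablePred Allowed := fun P => by unfold Allowed; infer_instance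

noncomputable def k : ℕ := Fintype.card Tile

noncomputable def e : Tile ≃ Fin k := Fintype.equivFin Tile

noncomputable def F : Finset (Fin 2 × Fin 2 → Fin k) :=
  Finset.univ.filter (fun p => ¬ Allowed (fun q => e.symm (p q)))

lemma notmem_F_iff (p : Fin 2 × Fin 2 → Fin k) :
    p ∉ F ↔ Allowed (fun q => e.symm (p q)) := by
  simp [F]

lemma mem_X_iff (f : ℤ × ℤ → Fin k) :
    (∀ a : ℤ × ℤ,
        (fun p : Fin 2 × Fin 2 => f (a.1 + (p.1 : ℤ), a.2 + (p.2 : ℤ))) ∉ F) ↔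
      (∀ x y : ℤ, Vld (e.symm (f (x, y))) ∧
        Hok (e.symm (f (x, y))) (e.symm (f (x + 1, y))) ∧
        Vok (e.symm (f (x, y))) (e.symm (f (x, y + 1)))) := by
  constructor
  · intro h x y
    have := (notmem_F_iff _).1 (h (x, y))
    simpa [Allowed] using this
  · intro h a
    rw [notmem_F_iff]
    simpa [Allowed] using h a.1 a.2


/- floor helpers over ℚ -/
lemma fd_nonneg (t q : ℚ) (h : 0 ≤ q) : ⌊t⌋ ≤ ⌊t + q⌋ :=
  Int.floor_le_floor (by linarith)

lemma fd_le (t q : ℚ) (n : ℤ) (h : q ≤ n) : ⌊t + q⌋ ≤ ⌊t⌋ + n := by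
  have h2 : t + q < ((⌊t⌋ + n + 1 : ℤ) : ℚ) := by
    push_cast; linarith [Int.lt_floor_add_one t]
  have := Int.floor_lt.2 h2; omega

lemma fd_ge (t q : ℚ) (n : ℤ) (h : (n : ℚ) ≤ q) : ⌊t⌋ + n ≤ ⌊t + q⌋ :=
  Int.le_floor.2 (by push_cast; linarith [Int.floor_le t])

lemma carry2 (w : ℚ) : 0 ≤ ⌊2 * w⌋ - 2 * ⌊w⌋ ∧ ⌊2 * w⌋ - 2 * ⌊w⌋ ≤ 1 := by
  have h1 : 2 * ⌊w⌋ ≤ ⌊2 * w⌋ := Int.le_floor.2 (by push_cast; linarith [Int.floor_le w])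
  have h2 : ⌊2 * w⌋ < 2 * ⌊w⌋ + 2 := Int.floor_lt.2 (by push_cast; linarith [Int.lt_floor_add_one w])
  omega

lemma carry3 (w : ℚ) : 0 ≤ ⌊3 * w⌋ - 3 * ⌊w⌋ ∧ ⌊3 * w⌋ - 3 * ⌊w⌋ ≤ 2 := by
  have h1 : 3 * ⌊w⌋ ≤ ⌊3 * w⌋ := Int.le_floor.2 (by push_cast; linarith [Int.floor_le w])
  have h2 : ⌊3 * w⌋ < 3 * ⌊w⌋ + 3 := Int.floor_lt.2 (by push_cast; linarith [Int.lt_floor_add_one w])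
  omega

/- the orbit -/
def ust (q : ℚ) : ℚ := if q ≤ 1 then 2 * q else q / 3
def dst (q : ℚ) : ℚ := if q ≤ 2 / 3 then 3 * q else q / 2

def Iv (q : ℚ) : Prop := 1 / 3 < q ∧ q ≤ 2

lemma iv_ust {q} (h : Iv q) : Iv (ust q) := by
  obtain ⟨h1, h2⟩ := h
  unfold ust; split <;> constructor <;> linarith

lemma iv_dst {q} (h : Iv q) : Iv (dst q) := by
  obtain ⟨h1, h2⟩ := h
  unfold dst; split <;> constructor <;> linarith

lemma ust_dst {q} (h : Iv q) : ust (dst q) = q := by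
  obtain ⟨h1, h2⟩ := h
  unfold ust dst; split_ifs with g1 g2 g3 <;> [linarith; ring; ring; linarith]

def alpha (y : ℤ) : ℚ := if 0 ≤ y then ust^[y.toNat] 1 else dst^[(-y).toNat] 1

lemma iv_one : Iv 1 := ⟨by norm_num, by norm_num⟩

lemma iv_ust_iter (n : ℕ) : Iv (ust^[n] 1) := by
  induction n with
  | zero => exact iv_one
  | succ n ih => rw [Function.iterate_succ_apply']; exact iv_ust ih

lemma iv_dst_iter (n : ℕ) : Iv (dst^[n] 1) := by
  induction n with
  | zero => exact iv_one
  | succ n ih => rw [Function.iterate_succ_apply']; exact iv_dst ih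

lemma iv_alpha (y : ℤ) : Iv (alpha y) := by
  unfold alpha; split
  · exact iv_ust_iter _
  · exact iv_dst_iter _

lemma step_alpha (y : ℤ) : alpha (y + 1) = ust (alpha y) := by
  rcases lt_trichotomy y (-1) with hy | hy | hy
  · have h1 : ¬ (0 ≤ y + 1) := by omega
    have h2 : ¬ (0 ≤ y) := by omega
    have h3 : (-y).toNat = (-(y+1)).toNat + 1 := by omega
    unfold alpha
    rw [if_neg h1, if_neg h2, h3, Function.iterate_succ_apply', ust_dst (iv_dst_iter _)]
  · subst hy
    have : alpha (-1 + 1) = 1 := by norm_num [alpha]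
    rw [this]
    have h2 : ¬ (0 ≤ (-1 : ℤ)) := by omega
    have : alpha (-1) = dst 1 := by
      unfold alpha; rw [if_neg h2]; norm_num
    rw [this, ust_dst iv_one]
  · have h1 : 0 ≤ y + 1 := by omega
    have h2 : 0 ≤ y := by omega
    have h3 : (y + 1).toNat = y.toNat + 1 := by omega
    unfold alpha
    rw [if_pos h1, if_pos h2, h3, Function.iterate_succ_apply']

lemma step_cases (y : ℤ) :
    (alpha y ≤ 1 ∧ alpha (y + 1) = 2 * alpha y) ∨
      (1 < alpha y ∧ alpha (y + 1) = alpha y / 3) := by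
  rw [step_alpha]; unfold ust
  split_ifs with h
  · exact Or.inl ⟨h, rfl⟩
  · exact Or.inr ⟨lt_of_not_ge h, rfl⟩


/- digits and carries of the explicit configuration -/
def aD (y x : ℤ) : ℤ := ⌊alpha y * (x + 1)⌋ - ⌊alpha y * x⌋

def cD (y x : ℤ) : ℤ :=
  if alpha y ≤ 1 then ⌊alpha (y + 1) * x⌋ - 2 * ⌊alpha y * x⌋
  else ⌊alpha y * x⌋ - 3 * ⌊alpha (y + 1) * x⌋

lemma alpha_succ_mul (y : ℤ) (x : ℚ) (h : alpha y ≤ 1) :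
    alpha (y + 1) * x = 2 * (alpha y * x) := by
  rcases step_cases y with ⟨_, h2⟩ | ⟨h1, _⟩
  · rw [h2]; ring
  · linarith

lemma alpha_of_B (y : ℤ) (x : ℚ) (h : ¬ alpha y ≤ 1) :
    alpha y * x = 3 * (alpha (y + 1) * x) := by
  rcases step_cases y with ⟨h1, _⟩ | ⟨_, h2⟩
  · exact absurd h1 h
  · rw [h2]; ring

lemma key_split (y x : ℤ) : alpha y * (x + 1) = alpha y * x + alpha y := by ring

lemma aD_nonneg (y x : ℤ) : 0 ≤ aD y x := by
  have := fd_nonneg (alpha y * x) (alpha y) (by linarith [(iv_alpha y).1])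
  unfold aD; rw [key_split]; omega

lemma aD_le_two (y x : ℤ) : aD y x ≤ 2 := by
  have := fd_le (alpha y * x) (alpha y) 2 (by exact_mod_cast (iv_alpha y).2)
  unfold aD; rw [key_split]; omega

lemma aD_le_one (y x : ℤ) (h : alpha y ≤ 1) : aD y x ≤ 1 := by
  have := fd_le (alpha y * x) (alpha y) 1 (by exact_mod_cast h)
  unfold aD; rw [key_split]; omega

lemma aD_ge_one (y x : ℤ) (h : 1 ≤ alpha y) : 1 ≤ aD y x := by
  have := fd_ge (alpha y * x) (alpha y) 1 (by exact_mod_cast h)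
  unfold aD; rw [key_split]; omega

lemma aD_pair (y x : ℤ) (h : 1 ≤ 2 * alpha y) : 1 ≤ aD y x + aD y (x + 1) := by
  have := fd_ge (alpha y * x) (2 * alpha y) 1 (by exact_mod_cast h)
  unfold aD; push_cast
  rw [show alpha y * ((x:ℚ) + 1 + 1) = alpha y * x + 2 * alpha y from by ring,
    show alpha y * ((x:ℚ) + 1) = alpha y * x + alpha y from by ring]
  omega

lemma aD_triple (y x : ℤ) (h : 1 ≤ 3 * alpha y) :
    1 ≤ aD y x + aD y (x + 1) + aD y (x + 1 + 1) := by
  have := fd_ge (alpha y * x) (3 * alpha y) 1 (by exact_mod_cast h)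
  unfold aD; push_cast
  rw [show alpha y * ((x:ℚ) + 1 + 1 + 1) = alpha y * x + 3 * alpha y from by ring,
    show alpha y * ((x:ℚ) + 1 + 1) = alpha y * x + 2 * alpha y from by ring,
    show alpha y * ((x:ℚ) + 1) = alpha y * x + alpha y from by ring]
  omega

lemma cD_bounds (y x : ℤ) : 0 ≤ cD y x ∧ cD y x ≤ 2 := by
  unfold cD; split_ifs with h
  · have := carry2 (alpha y * x)
    rw [alpha_succ_mul y x h]; omega
  · have := carry3 (alpha (y + 1) * x)
    rw [alpha_of_B y x h]; omega

lemma cD_le_one (y x : ℤ) (h : alpha y ≤ 1) : cD y x ≤ 1 := by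
  unfold cD; rw [if_pos h, alpha_succ_mul y x h]
  have := carry2 (alpha y * x); omega

def fin3 (z : ℤ) : Fin 3 := ⟨z.toNat % 3, Nat.mod_lt _ (by norm_num)⟩

lemma val_fin3 {z : ℤ} (h0 : 0 ≤ z) (h2 : z ≤ 2) : ((fin3 z).val : ℤ) = z := by
  simp only [fin3]; omega

lemma fin3_eq_zero {z : ℤ} (h0 : 0 ≤ z) (h2 : z ≤ 2) : fin3 z = 0 ↔ z = 0 := by
  constructor
  · intro h
    have := congrArg Fin.val h
    simp only [fin3, Fin.val_zero] at this; omega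
  · rintro rfl; rfl

def tfin (y : ℤ) : Fin 2 := if alpha y ≤ 1 then 0 else 1

lemma tfin_eq_zero {y : ℤ} : tfin y = 0 ↔ alpha y ≤ 1 := by
  unfold tfin; split_ifs with h <;> simp [h]

lemma tfin_eq_one {y : ℤ} : tfin y = 1 ↔ ¬ alpha y ≤ 1 := by
  unfold tfin; split_ifs with h <;> simp [h]

def tile (x y : ℤ) : Tile :=
  ⟨tfin y, fin3 (aD y x), fin3 (aD (y + 1) x), fin3 (cD y x), fin3 (cD y (x + 1)),
    fin3 (aD (y + 1) (x - 1))⟩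

lemma val_a (y x : ℤ) : ((fin3 (aD y x)).val : ℤ) = aD y x :=
  val_fin3 (aD_nonneg y x) (aD_le_two y x)

lemma val_c (y x : ℤ) : ((fin3 (cD y x)).val : ℤ) = cD y x :=
  val_fin3 (cD_bounds y x).1 (cD_bounds y x).2

lemma b_eq_zero (y x : ℤ) : fin3 (aD y x) = 0 ↔ aD y x = 0 :=
  fin3_eq_zero (aD_nonneg y x) (aD_le_two y x)

lemma vld_tile (x y : ℤ) : Vld (tile x y) := by
  constructor
  · intro ht
    have h : alpha y ≤ 1 := tfin_eq_zero.1 ht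
    have hs : alpha (y + 1) = 2 * alpha y := by
      rcases step_cases y with ⟨_, h2⟩ | ⟨h1, _⟩
      · exact h2
      · linarith
    refine ⟨?_, ?_, ?_, ?_⟩
    · have := aD_le_one y x h; have := val_a y x
      simp only [tile] at *; omega
    · have := cD_le_one y x h; have := val_c y x
      simp only [tile] at *; omega
    · have := cD_le_one y (x + 1) h; have := val_c y (x + 1)
      simp only [tile] at *; omega
    · show ((fin3 (aD (y+1) x)).val : ℤ) =
        2 * (fin3 (aD y x)).val - (fin3 (cD y x)).val + (fin3 (cD y (x+1))).val
      rw [val_a, val_a, val_c, val_c]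
      unfold aD cD
      simp only [if_pos h]
      push_cast
      omega
  · intro ht
    have h : ¬ alpha y ≤ 1 := tfin_eq_one.1 ht
    constructor
    · have := aD_ge_one y x (by linarith [lt_of_not_ge h]); have := val_a y x
      simp only [tile] at *; omega
    · show (3 * (fin3 (aD (y+1) x)).val : ℤ) =
        (fin3 (aD y x)).val + (fin3 (cD y x)).val - (fin3 (cD y (x+1))).val
      rw [val_a, val_a, val_c, val_c]
      unfold aD cD
      simp only [if_neg h]
      push_cast
      omega

lemma hok_tile (x y : ℤ) : Hok (tile x y) (tile (x + 1) y) := by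
  refine ⟨rfl, rfl, ?_, ?_, ?_⟩
  · show fin3 (aD (y+1) (x + 1 - 1)) = fin3 (aD (y+1) x)
    norm_num
  · intro ht
    have h : alpha y ≤ 1 := tfin_eq_zero.1 ht
    have hs : alpha (y + 1) = 2 * alpha y := by
      rcases step_cases y with ⟨_, h2⟩ | ⟨h1, _⟩
      · exact h2
      · linarith
    have hp : 1 ≤ 2 * alpha (y + 1) := by
      have := (iv_alpha y).1; rw [hs]; linarith
    have := aD_pair (y + 1) x hp
    rintro ⟨hb1, hb2⟩
    simp only [tile] at hb1 hb2
    rw [b_eq_zero] at hb1 hb2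
    omega
  · intro ht
    have h : ¬ alpha y ≤ 1 := tfin_eq_one.1 ht
    have hs : alpha (y + 1) = alpha y / 3 := by
      rcases step_cases y with ⟨h1, _⟩ | ⟨_, h2⟩
      · exact absurd h1 h
      · exact h2
    have hp : 1 ≤ 3 * alpha (y + 1) := by
      have := lt_of_not_ge h; rw [hs]; linarith
    have := aD_triple (y + 1) (x - 1) hp
    rintro ⟨hd, hb1, hb2⟩
    simp only [tile] at hd hb1 hb2
    rw [b_eq_zero] at hd hb1 hb2
    rw [show x - 1 + 1 = x from by ring] at this
    omega

lemma vok_tile (x y : ℤ) : Vok (tile x y) (tile x (y + 1)) := rfl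


/-! ### Summation infrastructure -/

def Sm (g : ℤ → ℤ) (s : ℤ) (N : ℕ) : ℤ := ∑ i ∈ Finset.range N, g (s + i)

lemma Sm_zero (g s) : Sm g s 0 = 0 := rfl

lemma Sm_succ (g s N) : Sm g s (N + 1) = Sm g s N + g (s + N) :=
  Finset.sum_range_succ _ _

lemma Sm_congr {g g' : ℤ → ℤ} (h : ∀ x, g x = g' x) (s N) : Sm g s N = Sm g' s N := by
  unfold Sm; exact Finset.sum_congr rfl fun i _ => h _

lemma Sm_add (g s M N) : Sm g s (M + N) = Sm g s M + Sm g (s + M) N := by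
  induction N with
  | zero => simp [Sm_zero]
  | succ N ih =>
      rw [show M + (N + 1) = (M + N) + 1 from rfl, Sm_succ, ih, Sm_succ]
      rw [show s + (↑(M + N) : ℤ) = s + M + N from by push_cast; ring]
      ring

lemma Sm_nonneg {g : ℤ → ℤ} (h : ∀ x, 0 ≤ g x) (s N) : 0 ≤ Sm g s N :=
  Finset.sum_nonneg fun i _ => h _

lemma Sm_le {g : ℤ → ℤ} (c : ℤ) (h : ∀ x, g x ≤ c) (s N) : Sm g s N ≤ c * N := by
  induction N with
  | zero => simp [Sm_zero]
  | succ N ih => rw [Sm_succ]; push_cast; linarith [h (s + (N : ℤ))]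

lemma Sm_triple {g : ℤ → ℤ} (h : ∀ x, 1 ≤ g x + g (x + 1) + g (x + 2)) (s : ℤ) (m : ℕ) :
    (m : ℤ) ≤ Sm g s (3 * m) := by
  induction m with
  | zero => simp [Sm_zero]
  | succ m ih =>
      rw [show 3 * (m + 1) = 3 * m + 3 from by ring, Sm_add]
      have h3 : Sm g (s + ↑(3 * m)) 3 =
          g (s + ↑(3 * m)) + g (s + ↑(3 * m) + 1) + g (s + ↑(3 * m) + 2) := by
        show Sm g _ (2 + 1) = _
        rw [Sm_succ, show (2 : ℕ) = 1 + 1 from rfl, Sm_succ, Sm_succ, Sm_zero]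
        push_cast; ring_nf
      rw [h3]
      have := h (s + ↑(3 * m))
      push_cast at this ⊢
      push_cast at ih
      linarith

lemma Sm_tele (c : ℤ → ℤ) (s : ℤ) (N : ℕ) :
    Sm (fun x => c (x + 1) - c x) s N = c (s + N) - c s := by
  induction N with
  | zero => simp [Sm_zero]
  | succ N ih =>
      rw [Sm_succ, ih, show s + (↑(N + 1) : ℤ) = s + ↑N + 1 from by push_cast; ring]
      ring

lemma Sm_shift {g : ℤ → ℤ} (h : ∀ x, 0 ≤ g x ∧ g x ≤ 2) (s t : ℤ) (N : ℕ) :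
    |Sm g t N - Sm g s N| ≤ 2 * |t - s| := by
  have key : ∀ (s : ℤ) (d : ℕ), |Sm g (s + d) N - Sm g s N| ≤ 2 * d := by
    intro s d
    have h1 : Sm g s (d + N) = Sm g s d + Sm g (s + d) N := Sm_add g s d N
    have h2 : Sm g s (N + d) = Sm g s N + Sm g (s + N) d := Sm_add g s N d
    have h3 : Sm g s (d + N) = Sm g s (N + d) := by rw [Nat.add_comm]
    have b1 := Sm_nonneg (fun x => (h x).1) s d
    have b2 := Sm_le 2 (fun x => (h x).2) s d
    have b3 := Sm_nonneg (fun x => (h x).1) (s + N) d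
    have b4 := Sm_le 2 (fun x => (h x).2) (s + N) d
    rw [abs_le]; omega
  rcases le_total s t with hle | hle
  · have hd : t = s + (t - s).toNat := by omega
    have := key s (t - s).toNat
    rw [← hd] at this
    have : |Sm g t N - Sm g s N| ≤ 2 * ((t - s).toNat : ℤ) := this
    rw [abs_of_nonneg (by omega : (0:ℤ) ≤ t - s)]; omega
  · have hd : s = t + (s - t).toNat := by omega
    have := key t (s - t).toNat
    rw [← hd] at this
    rw [abs_sub_comm] at this
    rw [abs_of_nonpos (by omega : t - s ≤ 0)]; omega

lemma fin2_cases (t : Fin 2) : t = 0 ∨ t = 1 := by revert t; decide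


/-! ### Derived facts for an arbitrary valid configuration -/

section Conf

variable (T : ℤ → ℤ → Tile)

def Arow (y x : ℤ) : ℤ := ((T x y).a.val : ℤ)
def Crow (y x : ℤ) : ℤ := ((T x y).c.val : ℤ)
def ty (y : ℤ) : Fin 2 := (T 0 y).t

variable {T}
variable (hVl : ∀ x y, Vld (T x y)) (hH : ∀ x y, Hok (T x y) (T (x + 1) y))
  (hVo : ∀ x y, Vok (T x y) (T x (y + 1)))

include hH in
lemma t_const (x y : ℤ) : (T x y).t = ty T y := by
  unfold ty
  induction x using Int.induction_on with
  | zero => rfl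
  | succ i ih => rw [← (hH i y).1]; exact ih
  | pred i ih => rw [(hH (-(i:ℤ) - 1) y).1, show (-(i:ℤ) - 1) + 1 = -(i:ℤ) from by ring]; exact ih

lemma A_bounds (y x : ℤ) : 0 ≤ Arow T y x ∧ Arow T y x ≤ 2 := by
  unfold Arow; have := (T x y).a.isLt; omega

lemma C_bounds (y x : ℤ) : 0 ≤ Crow T y x ∧ Crow T y x ≤ 2 := by
  unfold Crow; have := (T x y).c.isLt; omega

include hVl hH in
lemma A_le_one {y : ℤ} (h : ty T y = 0) (x : ℤ) : Arow T y x ≤ 1 := by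
  have := ((hVl x y).1 (by rw [t_const hH]; exact h)).1
  unfold Arow; omega

include hVo in
lemma b_val (x y : ℤ) : ((T x y).b.val : ℤ) = Arow T (y + 1) x := by
  unfold Arow; rw [hVo x y]

include hH in
lemma c'_val (x y : ℤ) : ((T x y).c'.val : ℤ) = Crow T y (x + 1) := by
  unfold Crow; rw [(hH x y).2.1]

include hVl hH hVo in
lemma rowA {y : ℤ} (h : ty T y = 0) (x : ℤ) :
    Arow T (y + 1) x = 2 * Arow T y x - Crow T y x + Crow T y (x + 1) := by
  have h2 := ((hVl x y).1 (by rw [t_const hH]; exact h)).2.2.2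
  rw [b_val hVo, c'_val hH] at h2
  unfold Arow Crow at *; omega

include hVl hH hVo in
lemma rowB {y : ℤ} (h : ty T y = 1) (x : ℤ) :
    3 * Arow T (y + 1) x = Arow T y x + Crow T y x - Crow T y (x + 1) := by
  have h2 := ((hVl x y).2 (by rw [t_const hH]; exact h)).2
  rw [b_val hVo, c'_val hH] at h2
  unfold Arow Crow at *; omega

include hVl hH hVo in
lemma window (y x : ℤ) : 1 ≤ Arow T y x + Arow T y (x + 1) + Arow T y (x + 2) := by
  have hy : y = (y - 1) + 1 := by ring
  set y' := y - 1 with hy'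
  rcases fin2_cases (ty T y') with h | h
  · -- type A: adjacent outputs not both zero
    have h5 := (hH (x + 1) y').2.2.2.1 (by rw [t_const hH]; exact h)
    have e1 : ((T (x + 1) y').b.val : ℤ) = Arow T y (x + 1) := by
      rw [b_val hVo]; congr 1; omega
    have e2 : ((T (x + 1 + 1) y').b.val : ℤ) = Arow T y (x + 2) := by
      rw [b_val hVo]; congr 1 <;> omega
    have hA := A_bounds (T := T) y x
    have hB := A_bounds (T := T) y (x + 1)
    have hC := A_bounds (T := T) y (x + 2)
    by_contra hcon
    apply h5
    constructor
    · have : ((T (x + 1) y').b.val : ℤ) = 0 := by omega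
      have hv : (T (x + 1) y').b.val = 0 := by exact_mod_cast this
      exact Fin.ext hv
    · have : ((T (x + 1 + 1) y').b.val : ℤ) = 0 := by omega
      have hv : (T (x + 1 + 1) y').b.val = 0 := by exact_mod_cast this
      exact Fin.ext hv
  · -- type B: three consecutive outputs not all zero
    have h5 := (hH (x + 1) y').2.2.2.2 (by rw [t_const hH]; exact h)
    have hd : (T (x + 1) y').d = (T x y').b := (hH x y').2.2.1
    have e0 : ((T x y').b.val : ℤ) = Arow T y x := by
      rw [b_val hVo]; congr 1; omega
    have e1 : ((T (x + 1) y').b.val : ℤ) = Arow T y (x + 1) := by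
      rw [b_val hVo]; congr 1; omega
    have e2 : ((T (x + 1 + 1) y').b.val : ℤ) = Arow T y (x + 2) := by
      rw [b_val hVo]; congr 1 <;> omega
    have hA := A_bounds (T := T) y x
    have hB := A_bounds (T := T) y (x + 1)
    have hC := A_bounds (T := T) y (x + 2)
    by_contra hcon
    apply h5
    refine ⟨?_, ?_, ?_⟩
    · rw [hd]
      have : ((T x y').b.val : ℤ) = 0 := by omega
      exact Fin.ext (show (T x y').b.val = 0 by exact_mod_cast this)
    · have : ((T (x + 1) y').b.val : ℤ) = 0 := by omega
      exact Fin.ext (show (T (x + 1) y').b.val = 0 by exact_mod_cast this)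
    · have : ((T (x + 1 + 1) y').b.val : ℤ) = 0 := by omega
      exact Fin.ext (show (T (x + 1 + 1) y').b.val = 0 by exact_mod_cast this)

include hVl hH hVo in
lemma sumA {y : ℤ} (h : ty T y = 0) (s : ℤ) (N : ℕ) :
    Sm (Arow T (y + 1)) s N =
      2 * Sm (Arow T y) s N + (Crow T y (s + N) - Crow T y s) := by
  have h1 : Sm (Arow T (y + 1)) s N =
      Sm (fun x => 2 * Arow T y x + (Crow T y (x + 1) - Crow T y x)) s N :=
    Sm_congr (fun x => by rw [rowA hVl hH hVo h x]; ring) s N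
  rw [h1]
  have h2 : Sm (fun x => 2 * Arow T y x + (Crow T y (x + 1) - Crow T y x)) s N =
      Sm (fun x => 2 * Arow T y x) s N + Sm (fun x => Crow T y (x + 1) - Crow T y x) s N := by
    unfold Sm; rw [← Finset.sum_add_distrib]
  rw [h2, Sm_tele]
  have h3 : Sm (fun x => 2 * Arow T y x) s N = 2 * Sm (Arow T y) s N := by
    unfold Sm; rw [Finset.mul_sum]
  rw [h3]

include hVl hH hVo in
lemma sumB {y : ℤ} (h : ty T y = 1) (s : ℤ) (N : ℕ) :
    3 * Sm (Arow T (y + 1)) s N =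
      Sm (Arow T y) s N - (Crow T y (s + N) - Crow T y s) := by
  have h1 : Sm (fun x => 3 * Arow T (y + 1) x) s N =
      Sm (fun x => Arow T y x - (Crow T y (x + 1) - Crow T y x)) s N :=
    Sm_congr (fun x => by rw [rowB hVl hH hVo h x]; ring) s N
  have h2 : Sm (fun x => 3 * Arow T (y + 1) x) s N = 3 * Sm (Arow T (y + 1)) s N := by
    unfold Sm; rw [Finset.mul_sum]
  have h3 : Sm (fun x => Arow T y x - (Crow T y (x + 1) - Crow T y x)) s N =
      Sm (Arow T y) s N - Sm (fun x => Crow T y (x + 1) - Crow T y x) s N := by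
    unfold Sm; rw [← Finset.sum_sub_distrib]
  rw [← h2, h1, h3, Sm_tele]

end Conf


/-! ### No vertical period -/

lemma pow3_le_pow6 {m j : ℕ} (h : m ≤ j) : (3:ℤ)^m ≤ 6^j :=
  le_trans (pow_le_pow_right₀ (by norm_num) h)
    (pow_le_pow_left₀ (by norm_num) (by norm_num) j)

section NoPeriod

variable {T : ℤ → ℤ → Tile}
variable (hVl : ∀ x y, Vld (T x y)) (hH : ∀ x y, Hok (T x y) (T (x + 1) y))
  (hVo : ∀ x y, Vok (T x y) (T x (y + 1)))

include hVl hH hVo in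
lemma chainV (j : ℕ) : ∃ n m : ℕ, n + m = j ∧ ∀ N : ℕ,
    |(3:ℤ)^m * Sm (Arow T (j:ℤ)) 0 N - 2^n * Sm (Arow T 0) 0 N| ≤ 4 * 6^j := by
  induction j with
  | zero => exact ⟨0, 0, rfl, fun N => by norm_num⟩
  | succ j ih =>
      obtain ⟨n, m, hnm, hb⟩ := ih
      have hm6 : (3:ℤ)^m ≤ 6^j := pow3_le_pow6 (by omega)
      have h6pos : (1:ℤ) ≤ 6^j := one_le_pow₀ (by norm_num)
      have h3nn : (0:ℤ) ≤ 3^m := by positivity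
      have hc : ((j+1:ℕ):ℤ) = (j:ℤ)+1 := by push_cast; ring
      rcases fin2_cases (ty T (j:ℤ)) with h | h
      · refine ⟨n+1, m, by omega, fun N => ?_⟩
        rw [hc]
        have hs := sumA hVl hH hVo h 0 N
        set X := Sm (Arow T (j:ℤ)) 0 N with hX
        set S0 := Sm (Arow T 0) 0 N with hS0
        set d := Crow T (j:ℤ) (0+N) - Crow T (j:ℤ) 0 with hdd
        have hd : |d| ≤ 2 := by
          have := C_bounds (T:=T) (j:ℤ) (0+(N:ℤ)); have := C_bounds (T:=T) (j:ℤ) 0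
          rw [abs_le]; omega
        rw [hs]
        have key : (3:ℤ)^m * (2*X + d) - 2^(n+1)*S0
            = 2*((3:ℤ)^m*X - 2^n*S0) + 3^m*d := by ring
        calc |(3:ℤ)^m * (2*X + d) - 2^(n+1)*S0|
            = |2*((3:ℤ)^m*X - 2^n*S0) + 3^m*d| := by rw [key]
          _ ≤ |2*((3:ℤ)^m*X - 2^n*S0)| + |3^m*d| := abs_add_le _ _
          _ = 2*|(3:ℤ)^m*X - 2^n*S0| + 3^m*|d| := by
              rw [abs_mul, abs_mul, abs_of_nonneg (by norm_num : (0:ℤ) ≤ 2),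
                abs_of_nonneg h3nn]
          _ ≤ 2*(4*6^j) + 3^m*2 := by
              have h1 := hb N
              have h2 : (3:ℤ)^m*|d| ≤ 3^m*2 := mul_le_mul_of_nonneg_left hd h3nn
              linarith
          _ ≤ 4 * 6^(j+1) := by rw [pow_succ]; linarith
      · refine ⟨n, m+1, by omega, fun N => ?_⟩
        rw [hc]
        have hs := sumB hVl hH hVo h 0 N
        set X := Sm (Arow T (j:ℤ)) 0 N with hX
        set S0 := Sm (Arow T 0) 0 N with hS0
        set SN := Sm (Arow T ((j:ℤ)+1)) 0 N with hSN
        set d := Crow T (j:ℤ) (0+N) - Crow T (j:ℤ) 0 with hdd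
        have hd : |d| ≤ 2 := by
          have := C_bounds (T:=T) (j:ℤ) (0+(N:ℤ)); have := C_bounds (T:=T) (j:ℤ) 0
          rw [abs_le]; omega
        have e : (3:ℤ)^(m+1) * SN = 3^m * (X - d) := by
          rw [pow_succ, show (3:ℤ)^m*3*SN = 3^m*(3*SN) from by ring, hs]
        calc |(3:ℤ)^(m+1) * SN - 2^n*S0|
            = |((3:ℤ)^m*X - 2^n*S0) + 3^m*(-d)| := by rw [e]; ring_nf
          _ ≤ |(3:ℤ)^m*X - 2^n*S0| + |3^m*(-d)| := abs_add_le _ _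
          _ = |(3:ℤ)^m*X - 2^n*S0| + 3^m*|d| := by
              rw [abs_mul, abs_neg, abs_of_nonneg h3nn]
          _ ≤ 4*6^j + 3^m*2 := by
              have h2 : (3:ℤ)^m*|d| ≤ 3^m*2 := mul_le_mul_of_nonneg_left hd h3nn
              linarith [hb N]
          _ ≤ 4 * 6^(j+1) := by rw [pow_succ]; linarith

include hVl hH hVo in
lemma no_period_vert (p V : ℤ) (hV1 : 1 ≤ V)
    (hper : ∀ x y, T (x + p) (y + V) = T x y) : False := by
  set Vn := V.toNat with hVn'
  have hVn : (Vn:ℤ) = V := by omega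
  obtain ⟨n, m, hnm, hb⟩ := chainV hVl hH hVo Vn
  have hperA : ∀ x : ℤ, Arow T (Vn:ℤ) (p + x) = Arow T 0 x := by
    intro x
    have h0 := hper x 0
    rw [zero_add] at h0
    show ((T (p + x) (Vn:ℤ)).a.val : ℤ) = ((T x 0).a.val : ℤ)
    rw [hVn, show p + x = x + p from add_comm p x, h0]
  have hSper : ∀ N : ℕ, Sm (Arow T (Vn:ℤ)) p N = Sm (Arow T 0) 0 N := by
    intro N
    unfold Sm
    refine Finset.sum_congr rfl fun i _ => ?_
    rw [zero_add]
    exact hperA i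
  set K2 : ℤ := 4 * 6^Vn + 3^m * (2*|p|) with hK2
  have h3nn : (0:ℤ) ≤ 3^m := by positivity
  have hK : ∀ N : ℕ, |(3:ℤ)^m - 2^n| * Sm (Arow T 0) 0 N ≤ K2 := by
    intro N
    set S0N := Sm (Arow T 0) 0 N with hS0N
    set SVN := Sm (Arow T (Vn:ℤ)) 0 N with hSVN
    have hshift : |SVN - S0N| ≤ 2*|p| := by
      have := Sm_shift (fun x => A_bounds (T:=T) (Vn:ℤ) x) p 0 N
      rw [hSper N] at this
      simpa using this
    have e : ((3:ℤ)^m - 2^n) * S0N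
        = ((3:ℤ)^m * SVN - 2^n * S0N) - 3^m * (SVN - S0N) := by ring
    have hnn : 0 ≤ S0N := Sm_nonneg (fun x => (A_bounds (T:=T) 0 x).1) 0 N
    calc |(3:ℤ)^m - 2^n| * S0N = |((3:ℤ)^m - 2^n) * S0N| := by
          rw [abs_mul, abs_of_nonneg hnn]
      _ = |((3:ℤ)^m * SVN - 2^n * S0N) + (-(3^m * (SVN - S0N)))| := by rw [e]; ring_nf
      _ ≤ |(3:ℤ)^m * SVN - 2^n * S0N| + |(-(3^m * (SVN - S0N)))| := abs_add_le _ _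
      _ ≤ 4 * 6^Vn + 3^m * (2*|p|) := by
          have h1 := hb N
          have h2 : |(-(3^m * (SVN - S0N)))| = 3^m * |SVN - S0N| := by
            rw [abs_neg, abs_mul, abs_of_nonneg h3nn]
          have h3 : (3:ℤ)^m * |SVN - S0N| ≤ 3^m * (2*|p|) :=
            mul_le_mul_of_nonneg_left hshift h3nn
          rw [h2]; linarith
  have heq : (3:ℤ)^m = 2^n := by
    by_contra hne
    have h1 : (1:ℤ) ≤ |(3:ℤ)^m - 2^n| := Int.one_le_abs (sub_ne_zero.2 hne)
    have hK2nn : 0 ≤ K2 := le_trans (by simp [Sm_zero]) (hK 0)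
    have hS := Sm_triple (fun x => window hVl hH hVo 0 x) 0 (K2.toNat + 1)
    have hle := hK (3 * (K2.toNat + 1))
    set S0N := Sm (Arow T 0) 0 (3 * (K2.toNat + 1)) with hS0N
    have hnn : 0 ≤ S0N := Sm_nonneg (fun x => (A_bounds (T:=T) 0 x).1) 0 _
    have : S0N ≤ K2 := le_trans (le_mul_of_one_le_left hnn h1) hle
    omega
  have heqN : (3:ℕ)^m = 2^n := by exact_mod_cast heq
  have hm0 : m = 0 := by
    by_contra hm
    have h3 : (3:ℕ) ∣ 2^n := heqN ▸ dvd_pow_self 3 hm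
    have := (Nat.Prime.dvd_of_dvd_pow (by norm_num : Nat.Prime 3) h3)
    norm_num at this
  have hn0 : n = 0 := by
    rw [hm0] at heqN
    simp at heqN
    by_contra hn
    have := Nat.one_lt_two_pow_iff.mpr hn
    omega
  omega

end NoPeriod


/-! ### No horizontal period -/

def Srow (T : ℤ → ℤ → Tile) (pN : ℕ) (y : ℤ) : ℤ := Sm (Arow T y) 0 pN

section NoPeriodH

variable {T : ℤ → ℤ → Tile}
variable (hVl : ∀ x y, Vld (T x y)) (hH : ∀ x y, Hok (T x y) (T (x + 1) y))
  (hVo : ∀ x y, Vok (T x y) (T x (y + 1)))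
variable {p : ℤ} (hp : 1 ≤ p) (hper : ∀ x y, T (x + p) y = T x y)

include hper in
lemma hA_per (y x : ℤ) : Arow T y (x + p) = Arow T y x := by
  unfold Arow; rw [hper x y]

include hper in
lemma hC_per (y x : ℤ) : Crow T y (x + p) = Crow T y x := by
  unfold Crow; rw [hper x y]

include hper in
lemma sm_per (y s : ℤ) (N : ℕ) : Sm (Arow T y) (s + p) N = Sm (Arow T y) s N := by
  unfold Sm
  refine Finset.sum_congr rfl fun i _ => ?_
  rw [show s + p + (i:ℤ) = (s + i) + p from by ring, hA_per hper]

include hVl hH hVo hp hper in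
lemma S_pos (y : ℤ) : 1 ≤ Srow T p.toNat y := by
  set pN := p.toNat with hpN'
  have hpN : (pN:ℤ) = p := by omega
  have h3 : Sm (Arow T y) 0 (3 * pN) = 3 * Srow T pN y := by
    rw [show 3 * pN = pN + (pN + pN) from by ring, Sm_add, Sm_add]
    simp only [hpN]
    rw [sm_per hper, sm_per hper, sm_per hper]
    unfold Srow; ring
  have htr := Sm_triple (fun x => window hVl hH hVo y x) 0 pN
  rw [h3] at htr
  have : 1 ≤ (pN:ℤ) := by omega
  omega

include hper in
lemma S_carry (y : ℤ) : Crow T y (0 + p.toNat) - Crow T y 0 = 0 := by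
  have hpN : ((p.toNat:ℕ):ℤ) = p ∨ ((p.toNat:ℕ):ℤ) = 0 := by omega
  rcases hpN with h | h
  · rw [h, zero_add, show p = 0 + p from (zero_add p).symm, hC_per hper]
    · simp
  · rw [h]; simp

include hVl hH hVo hper in
lemma S_typeA {y : ℤ} (h : ty T y = 0) :
    Srow T p.toNat (y + 1) = 2 * Srow T p.toNat y ∧ Srow T p.toNat y ≤ (p.toNat:ℤ) := by
  constructor
  · have := sumA hVl hH hVo h 0 p.toNat
    rw [S_carry hper] at this
    unfold Srow; omega
  · exact Sm_le 1 (fun x => A_le_one hVl hH h x) 0 p.toNat |>.trans (by omega)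

include hVl hH hVo hper in
lemma S_typeB {y : ℤ} (h : ty T y = 1) :
    3 * Srow T p.toNat (y + 1) = Srow T p.toNat y := by
  have := sumB hVl hH hVo h 0 p.toNat
  rw [S_carry hper] at this
  unfold Srow; omega

lemma S_le_gen (y : ℤ) : Srow T p.toNat y ≤ 2 * (p.toNat:ℤ) := by
  have := Sm_le 2 (fun x => (A_bounds (T:=T) y x).2) 0 p.toNat
  unfold Srow; omega

include hVl hH hVo hper in
lemma chainH (j : ℤ) (i : ℕ) : ∃ n m : ℕ, n + m = i ∧
    (3:ℤ)^m * Srow T p.toNat (j + i) = 2^n * Srow T p.toNat j ∧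
    (m = 0 → n = i ∧ ∀ i' : ℕ, i' < i → ty T (j + i') = 0) := by
  induction i with
  | zero => exact ⟨0, 0, rfl, by norm_num, fun _ => ⟨rfl, fun i' hi' => absurd hi' (by omega)⟩⟩
  | succ i ih =>
      obtain ⟨n, m, hnm, heq, hcl⟩ := ih
      have hcast : (j + ((i:ℕ)+1:ℕ)) = (j + i) + 1 := by push_cast; ring
      rcases fin2_cases (ty T (j + i)) with h | h
      · refine ⟨n + 1, m, by omega, ?_, ?_⟩
        · rw [hcast, (S_typeA hVl hH hVo hper h).1]
          rw [show (3:ℤ)^m * (2 * Srow T p.toNat (j+i)) = 2 * ((3:ℤ)^m * Srow T p.toNat (j+i)) from by ring,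
            heq, pow_succ]
          ring
        · intro hm0
          obtain ⟨hn, hall⟩ := hcl hm0
          refine ⟨by omega, fun i' hi' => ?_⟩
          rcases Nat.lt_or_ge i' i with hlt | hge
          · exact hall i' hlt
          · have : i' = i := by omega
            rw [this]; exact h
      · refine ⟨n, m + 1, by omega, ?_, by omega⟩
        rw [hcast, pow_succ,
          show (3:ℤ)^m * 3 * Srow T p.toNat ((j+i) + 1)
            = (3:ℤ)^m * (3 * Srow T p.toNat ((j+i) + 1)) from by ring,
          S_typeB hVl hH hVo hper h, heq]

include hVl hH hVo hp hper in
lemma unboundedH (K : ℕ) : ∃ (j : ℤ) (n m : ℕ), K ≤ m ∧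
    (3:ℤ)^m * Srow T p.toNat j = 2^n * Srow T p.toNat 0 := by
  induction K with
  | zero => exact ⟨0, 0, 0, le_refl 0, by norm_num⟩
  | succ K ih =>
      obtain ⟨j, n, m, hK, heq⟩ := ih
      set pN := p.toNat with hpN'
      set i0 := 2 * pN + 1 with hi0
      obtain ⟨n', m', hnm', heq', hcl⟩ := chainH hVl hH hVo hper j i0
      by_cases hm' : m' = 0
      · exfalso
        obtain ⟨hn', _⟩ := hcl hm'
        rw [hm'] at heq'
        norm_num at heq'
        have h1 : (1:ℤ) ≤ Srow T p.toNat j := S_pos hVl hH hVo hp hper j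
        have h2 : Srow T p.toNat (j + (i0:ℤ)) ≤ 2 * ((p.toNat : ℕ):ℤ) := S_le_gen (j + (i0:ℤ))
        have h3 : (2:ℤ)^i0 ≤ 2^n' * Srow T p.toNat j := by
          rw [hn']
          exact le_mul_of_one_le_right (by positivity) h1
        have h4 : (2 * (p.toNat:ℕ) : ℤ) < 2^i0 := by
          have : (2 * p.toNat : ℕ) < 2^i0 := by
            calc 2 * p.toNat < 2^(2*p.toNat) := Nat.lt_two_pow_self
              _ ≤ 2^i0 := Nat.pow_le_pow_right (by norm_num) (by omega)
          exact_mod_cast this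
        omega
      · refine ⟨j + i0, n + n', m + m', by omega, ?_⟩
        rw [pow_add, pow_add,
          show (3:ℤ)^m * 3^m' * Srow T pN (j + i0)
            = (3:ℤ)^m * (3^m' * Srow T pN (j + i0)) from by ring, heq',
          show (3:ℤ)^m * (2^n' * Srow T pN j) = 2^n' * ((3:ℤ)^m * Srow T pN j) from by ring,
          heq]
        ring

include hVl hH hVo hp hper in
lemma no_period_horiz : False := by
  set pN := p.toNat with hpN'
  obtain ⟨j, n, m, hK, heq⟩ := unboundedH hVl hH hVo hp hper (2 * pN + 1)
  have hSj : 1 ≤ Srow T pN j := S_pos hVl hH hVo hp hper j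
  have hS0 : 1 ≤ Srow T pN 0 := S_pos hVl hH hVo hp hper 0
  have hS0' : Srow T pN 0 ≤ 2 * (pN:ℤ) := S_le_gen 0
  set a := (Srow T pN j).toNat with ha
  set b := (Srow T pN 0).toNat with hb
  have hNat : 3^m * a = 2^n * b := by
    have : ((3^m * a : ℕ) : ℤ) = ((2^n * b : ℕ) : ℤ) := by
      push_cast
      rw [show ((a:ℤ)) = Srow T pN j from by omega, show ((b:ℤ)) = Srow T pN 0 from by omega]
      exact heq
    exact_mod_cast this
  have hcop : Nat.Coprime (3^m) (2^n) :=
    Nat.Coprime.pow m n (by norm_num)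
  have hdvd : 3^m ∣ b := by
    have h1 : (3:ℕ)^m ∣ 2^n * b := ⟨a, hNat.symm⟩
    exact hcop.dvd_of_dvd_mul_left h1
  have hble : 3^m ≤ b := Nat.le_of_dvd (by omega) hdvd
  have hb2p : b ≤ 2 * pN := by omega
  have hlt : 2 * pN < 3^m := by
    calc 2 * pN < 2^(2*pN+1) := lt_of_lt_of_le (Nat.lt_two_pow_self (n := 2*pN)) (Nat.pow_le_pow_right (by norm_num) (by omega))
      _ ≤ 3^(2*pN+1) := Nat.pow_le_pow_left (by norm_num) _
      _ ≤ 3^m := Nat.pow_le_pow_right (by norm_num) hK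
  omega

end NoPeriodH


/-! ### Assembly -/

lemma no_period {T : ℤ → ℤ → Tile}
    (hVl : ∀ x y, Vld (T x y)) (hH : ∀ x y, Hok (T x y) (T (x + 1) y))
    (hVo : ∀ x y, Vok (T x y) (T x (y + 1)))
    (v : ℤ × ℤ) (hv : v ≠ 0)
    (hper : ∀ x y, T (x + v.1) (y + v.2) = T x y) : False := by
  have hneg : ∀ x y, T (x + (-v.1)) (y + (-v.2)) = T x y := by
    intro x y
    have h := hper (x - v.1) (y - v.2)
    rw [show x - v.1 + v.1 = x from by ring, show y - v.2 + v.2 = y from by ring] at h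
    rw [show x + -v.1 = x - v.1 from by ring, show y + -v.2 = y - v.2 from by ring]
    exact h.symm
  rcases lt_trichotomy v.2 0 with h2 | h2 | h2
  · exact no_period_vert hVl hH hVo (-v.1) (-v.2) (by omega) hneg
  · have hv1 : v.1 ≠ 0 := by
      intro h1
      exact hv (Prod.ext h1 h2)
    have hper0 : ∀ x y, T (x + v.1) y = T x y := by
      intro x y
      have := hper x y
      rwa [h2, add_zero] at this
    have hneg0 : ∀ x y, T (x + (-v.1)) y = T x y := by
      intro x y
      have := hneg x y
      rwa [h2, neg_zero, add_zero] at this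
    rcases lt_trichotomy v.1 0 with h1 | h1 | h1
    · exact no_period_horiz hVl hH hVo (p := -v.1) (by omega) hneg0
    · exact hv1 h1
    · exact no_period_horiz hVl hH hVo (p := v.1) (by omega) hper0
  · exact no_period_vert hVl hH hVo v.1 v.2 (by omega) hper

end AperiodicSFT

/-- There is a nonempty two-dimensional subshift of finite type over ℤ²,
determined by finitely many forbidden 2×2 patterns, none of whose
configurations is periodic. -/
theorem exists_nonempty_aperiodic_SFT :
    ∃ (k : ℕ) (F : Finset (Fin 2 × Fin 2 → Fin k)),
      (Set.Nonempty {f : ℤ × ℤ → Fin k |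
          ∀ a : ℤ × ℤ,
            (fun p : Fin 2 × Fin 2 => f (a.1 + (p.1 : ℤ), a.2 + (p.2 : ℤ))) ∉ F}) ∧
      ∀ f ∈ {f : ℤ × ℤ → Fin k |
          ∀ a : ℤ × ℤ,
            (fun p : Fin 2 × Fin 2 => f (a.1 + (p.1 : ℤ), a.2 + (p.2 : ℤ))) ∉ F},
        ∀ v : ℤ × ℤ, v ≠ 0 → ∃ x : ℤ × ℤ, f (x + v) ≠ f x := by
  classical
  refine ⟨AperiodicSFT.k, AperiodicSFT.F, ?_, ?_⟩
  · refine ⟨fun z => AperiodicSFT.e (AperiodicSFT.tile z.1 z.2), ?_⟩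
    intro a
    rw [AperiodicSFT.notmem_F_iff]
    have h : ∀ x y : ℤ, AperiodicSFT.Vld (AperiodicSFT.tile x y) ∧
        AperiodicSFT.Hok (AperiodicSFT.tile x y) (AperiodicSFT.tile (x + 1) y) ∧
        AperiodicSFT.Vok (AperiodicSFT.tile x y) (AperiodicSFT.tile x (y + 1)) :=
      fun x y => ⟨AperiodicSFT.vld_tile x y, AperiodicSFT.hok_tile x y,
        AperiodicSFT.vok_tile x y⟩
    simpa [AperiodicSFT.Allowed, Equiv.symm_apply_apply] using h a.1 a.2
  · intro f hf v hv
    by_contra hcon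
    push_neg at hcon
    have hmem := (AperiodicSFT.mem_X_iff f).1 hf
    set T : ℤ → ℤ → AperiodicSFT.Tile := fun x y => AperiodicSFT.e.symm (f (x, y)) with hT
    have hVl : ∀ x y, AperiodicSFT.Vld (T x y) := fun x y => (hmem x y).1
    have hH : ∀ x y, AperiodicSFT.Hok (T x y) (T (x + 1) y) := fun x y => (hmem x y).2.1
    have hVo : ∀ x y, AperiodicSFT.Vok (T x y) (T x (y + 1)) := fun x y => (hmem x y).2.2
    have hper : ∀ x y, T (x + v.1) (y + v.2) = T x y := by
      intro x y
      show AperiodicSFT.e.symm (f (x + v.1, y + v.2)) = AperiodicSFT.e.symm (f (x, y))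
      rw [show ((x + v.1, y + v.2) : ℤ × ℤ) = (x, y) + v from rfl, hcon (x, y)]
    exact AperiodicSFT.no_period hVl hH hVo v hv hper
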